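/- Let H be a free abelian group of rank 2g with symplectic basis (x_1,...,x_g,y_1,...,y_g) and intersection form •. For any h in H, if the Lie bracket [h, ω] = 0 in L_3(H), where L(H) is the free Lie ring on H and ω = Σ_i [x_i, y_i] ∈ L_2(H), then h = 0. -/

import Mathlib

open FreeLieAlgebra

/-- The free Lie ring over `ℤ` on generators `x_1,…,x_g, y_1,…,y_g`,
encoded by the index type `Fin g ⊕ Fin g` (`Sum.inl i = x_i`, `Sum.inr i = y_i`). -/
abbrev FreeLie (g : ℕ) := FreeLieAlgebra ℤ (Fin g ⊕ Fin g)

/-- The element of the free Lie ring corresponding to `h = ∑ c_j e_j ∈ H = ℤ^{2g}`. -/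
noncomputable def lieOfH (g : ℕ) (c : Fin g ⊕ Fin g → ℤ) : FreeLie g :=
  ∑ j : Fin g ⊕ Fin g, c j • FreeLieAlgebra.of ℤ j

/-- The symplectic element `ω = ∑_i [x_i, y_i] ∈ L_2(H)`. -/
noncomputable def omegaLie (g : ℕ) : FreeLie g :=
  ∑ i : Fin g, ⁅FreeLieAlgebra.of ℤ (Sum.inl i : Fin g ⊕ Fin g),
      FreeLieAlgebra.of ℤ (Sum.inr i : Fin g ⊕ Fin g)⁆

/-- A regular nilpotent `4 × 4` integer matrix. -/
noncomputable abbrev M1 : Matrix (Fin 4) (Fin 4) ℤ := !![0,1,0,0; 0,0,1,0; 0,0,0,1; 0,0,0,0]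

/-- The elementary matrix `E₁₂`. -/
noncomputable abbrev M2 : Matrix (Fin 4) (Fin 4) ℤ := !![0,1,0,0; 0,0,0,0; 0,0,0,0; 0,0,0,0]

lemma matrix_key1 (c1 c2 : ℤ) (h : ⁅c1 • M1 + c2 • M2, ⁅M1, M2⁆⁆ = 0) : c1 = 0 := by
  have := congr_fun (congr_fun h 0) 3
  simp [Ring.lie_def, Matrix.mul_apply, Fin.sum_univ_succ, Matrix.add_apply,
    Matrix.smul_apply, Matrix.sub_apply, M1, M2] at this
  linarith

lemma matrix_key2 (c1 c2 : ℤ) (h : ⁅c1 • M2 + c2 • M1, ⁅M2, M1⁆⁆ = 0) : c2 = 0 := by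
  have := congr_fun (congr_fun h 0) 3
  simp [Ring.lie_def, Matrix.mul_apply, Fin.sum_univ_succ, Matrix.add_apply,
    Matrix.smul_apply, Matrix.sub_apply, M1, M2] at this
  linarith

attribute [local instance 100] LieRing.ofAssociativeRing

/-- Pushing the relation `⁅h, ω⁆ = 0` through the Lie algebra morphism sending
`x_k ↦ A`, `y_k ↦ B` and all other generators to `0`. -/
lemma aux (g : ℕ) (c : Fin g ⊕ Fin g → ℤ) (h : ⁅lieOfH g c, omegaLie g⁆ = 0)
    (k : Fin g) (A B : Matrix (Fin 4) (Fin 4) ℤ) :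
    ⁅c (Sum.inl k) • A + c (Sum.inr k) • B, ⁅A, B⁆⁆ = 0 := by
  set f : Fin g ⊕ Fin g → Matrix (Fin 4) (Fin 4) ℤ :=
    Sum.elim (fun i => if i = k then A else 0) (fun i => if i = k then B else 0) with hf
  let ρ : FreeLie g →ₗ⁅ℤ⁆ Matrix (Fin 4) (Fin 4) ℤ := FreeLieAlgebra.lift ℤ f
  have hh : ρ (lieOfH g c) = c (Sum.inl k) • A + c (Sum.inr k) • B := by
    have h0 : ρ (lieOfH g c) = ρ.toLinearMap (lieOfH g c) := rfl
    rw [h0, lieOfH, map_sum]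
    simp only [map_smul, LieHom.coe_toLinearMap, lift_of_apply, ρ]
    rw [Fintype.sum_sum_type]
    congr 1
    · rw [Finset.sum_eq_single k]
      · erw [lift_of_apply]; simp [hf]
      · intro i _ hik; erw [lift_of_apply]; simp [hf, hik]
      · simp
    · rw [Finset.sum_eq_single k]
      · erw [lift_of_apply]; simp [hf]
      · intro i _ hik; erw [lift_of_apply]; simp [hf, hik]
      · simp
  have hw : ρ (omegaLie g) = ⁅A, B⁆ := by
    have h0 : ρ (omegaLie g) = ρ.toLinearMap (omegaLie g) := rfl
    rw [h0, omegaLie, map_sum]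
    simp only [LieHom.coe_toLinearMap]
    rw [Finset.sum_eq_single k]
    · rw [LieHom.map_lie]; erw [lift_of_apply, lift_of_apply]; simp [hf]
    · intro i _ hik; rw [LieHom.map_lie]; erw [lift_of_apply, lift_of_apply]; simp [hf, hik]
    · simp
  have := congr_arg ρ h
  rw [LieHom.map_lie, hh, hw, map_zero] at this
  exact this

/-- For `h` in the span `H` of the generators of the free Lie ring,
if `[h, ω] = 0` in `L_3(H)` then `h = 0`. -/
theorem bracket_omega_eq_zero_imp_zero (g : ℕ) (c : Fin g ⊕ Fin g → ℤ)
    (h : ⁅lieOfH g c, omegaLie g⁆ = 0) : ∀ j, c j = 0 := by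
  intro j
  rcases j with k | k
  · exact matrix_key1 _ _ (aux g c h k M1 M2)
  · exact matrix_key2 _ _ (aux g c h k M2 M1)
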